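/- Let F be a finite field with q elements and let s, d, t be positive integers with s > dt. Let j be a positive integer such that either q^j + 1 ≥ s, or q^j is even, s − dt ∈ {3, q^j − 1}, and q^j + 2 ≥ s. Then there exists a linear code C ⊆ F^{js} of length js and dimension j(s − dt), together with a surjective labeling L : [js] → [s], such that every nonzero codeword of C has labelweight at least dt + 1. -/

import Mathlib

open Classical in
/-- The labelweight of a vector `c` with respect to a labeling `L`: the number of
distinct labels appearing on the support of `c`. -/
noncomputable def labelWeight {ι F : Type*} [Fintype ι] {s : ℕ} [Zero F]
    (L : ι → Fin s) (c : ι → F) : ℕ :=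
  ((Finset.univ.filter fun i => c i ≠ 0).image L).card

section StmtAux
open Polynomial
open scoped Classical
open Polynomial

variable (F : Type*) [Field F] [Fintype F] (j : ℕ)

noncomputable abbrev ExtF := SplittingField (X ^ (Fintype.card F) ^ j - X : F[X])

noncomputable instance : Fintype (ExtF F j) := by
  have : FiniteDimensional F (ExtF F j) := by infer_instance
  have : Finite (ExtF F j) := Module.finite_of_finite F
  exact Fintype.ofFinite _

theorem ExtF.finrank_eq (hj : j ≠ 0) : Module.finrank F (ExtF F j) = j := by
  classical
  set q := Fintype.card F with hq
  set K := ExtF F j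
  set g_poly := (X ^ q ^ j - X : F[X]) with hg
  have hq1 : 1 < q := Fintype.one_lt_card
  have aux : g_poly ≠ 0 := FiniteField.X_pow_card_pow_sub_X_ne_zero _ hj hq1
  obtain ⟨p, hp⟩ := CharP.exists F
  have hpp : p.Prime := CharP.char_is_prime F p
  haveI := Fact.mk hpp
  obtain ⟨m, hpp', hcard⟩ := FiniteField.card F p
  have hq2 : q = p ^ (m : ℕ) := hq.trans hcard
  have hqj : q ^ j = p ^ ((m : ℕ) * j) := by rw [hq2, pow_mul]
  have hpq : p ∣ q := hq2 ▸ dvd_pow_self p m.pos.ne'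
  have : CharP K p := charP_of_injective_algebraMap (algebraMap F K).injective p
  have key : Fintype.card (g_poly.rootSet K) = g_poly.natDegree :=
    card_rootSet_eq_natDegree (galois_poly_separable p _ (dvd_pow hpq hj))
      (SplittingField.splits g_poly)
  have nat_degree_eq : g_poly.natDegree = q ^ j :=
    FiniteField.X_pow_card_pow_sub_X_natDegree_eq _ hj hq1
  rw [nat_degree_eq] at key
  suffices huniv : g_poly.rootSet K = Set.univ by
    have key2 : Fintype.card K = q ^ j := by
      rw [← key]
      exact (Fintype.card_congr ((Equiv.setCongr huniv).trans (Equiv.Set.univ K))).symm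
    rw [Module.card_eq_pow_finrank (K := F) (V := K)] at key2
    exact Nat.pow_right_injective hq1 key2
  rw [Set.eq_univ_iff_forall]
  suffices h2 : ∀ (x) (_ : x ∈ (⊤ : Subalgebra F K)), x ∈ g_poly.rootSet K by simpa using h2
  rw [← SplittingField.adjoin_rootSet]
  simp_rw [Algebra.mem_adjoin_iff]
  intro x hx
  refine Subring.closure_induction ?_ ?_ ?_ ?_ ?_ ?_ hx <;> simp_rw [mem_rootSet_of_ne aux]
  · rintro x (⟨r, rfl⟩ | hx)
    · simp only [g_poly, map_sub, map_pow, aeval_X]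
      rw [← map_pow, FiniteField.pow_card_pow, sub_self]
    · rwa [mem_rootSet_of_ne aux] at hx
  · rw [← coeff_zero_eq_aeval_zero']
    simp only [g_poly, coeff_X_pow, coeff_X_zero, sub_zero, _root_.map_eq_zero, ite_eq_right_iff,
      one_ne_zero, coeff_sub]
    intro hn
    exact absurd (pow_eq_zero_iff hj |>.mp hn.symm) (by omega)
  · simp [g_poly]
  · simp only [g_poly, aeval_X_pow, aeval_X, map_sub, sub_eq_zero]
    intro x y _ _ hx hy
    have h := add_pow_char_pow (R := K) (p := p) (n := (m : ℕ) * j) x y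
    rw [← hqj] at h
    rw [h, hx, hy]
  · intro x _ hx
    simp only [g_poly, sub_eq_zero, aeval_X_pow, aeval_X, map_sub, sub_neg_eq_add] at *
    have h : (-x) ^ (p ^ ((m : ℕ) * j)) = -(x ^ (p ^ ((m : ℕ) * j))) := by
      rw [neg_pow, neg_one_pow_char_pow, neg_one_mul]
    rw [← hqj] at h
    rw [h, hx]
    ring
  · simp only [g_poly, aeval_X_pow, aeval_X, map_sub, mul_pow, sub_eq_zero]
    intro x y _ _ hx hy
    rw [hx, hy]
open scoped Classical in
theorem transfer {F K : Type*} [Field F] [Field K] [Algebra F K] [FiniteDimensional F K]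
    {j s k w : ℕ} (hj : 0 < j) (hjK : Module.finrank F K = j)
    (W : Submodule K (Fin s → K)) (hW : Module.finrank K W = k)
    (hw : ∀ x ∈ W, x ≠ 0 → w ≤ (Finset.univ.filter fun σ => x σ ≠ 0).card) :
    ∃ (C : Submodule F (Fin (j * s) → F)) (L : Fin (j * s) → Fin s),
      Function.Surjective L ∧ Module.finrank F C = j * k ∧
      ∀ c ∈ C, c ≠ 0 → w ≤ labelWeight L c := by
  have b : Module.Basis (Fin j) F K := (Module.finBasis F K).reindex (finCongr hjK)
  let e1 : K ≃ₗ[F] (Fin j → F) := b.equivFun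
  let idx : Fin (j * s) ≃ Fin s × Fin j :=
    (finCongr (mul_comm j s)).trans finProdFinEquiv.symm
  let T : (Fin s → K) ≃ₗ[F] (Fin (j * s) → F) :=
    { toFun := fun x i => e1 (x (idx i).1) (idx i).2
      invFun := fun c σ => e1.symm (fun r => c (idx.symm (σ, r)))
      map_add' := by intro x y; funext i; simp
      map_smul' := by intro a x; funext i; simp
      left_inv := by intro x; funext σ; simp
      right_inv := by
        intro c; funext i
        simp only [LinearEquiv.apply_symm_apply]
        congr 1
        rw [← Prod.mk.eta (p := idx i), Equiv.symm_apply_apply] }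
  refine ⟨(W.restrictScalars F).map (T : (Fin s → K) →ₗ[F] (Fin (j * s) → F)),
    fun i => (idx i).1, ?_, ?_, ?_⟩
  · intro σ
    exact ⟨idx.symm (σ, ⟨0, hj⟩), by simp⟩
  · rw [LinearEquiv.finrank_map_eq T]
    have e2 : (W.restrictScalars F) ≃ₗ[F] W :=
      (Submodule.restrictScalarsEquiv (R := K) (S := F) (M := Fin s → K) W).restrictScalars F
    rw [e2.finrank_eq, ← hjK, ← hW, Module.finrank_mul_finrank]
  · rintro c hc hc0
    obtain ⟨x, hxW, rfl⟩ := hc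
    have hx0 : x ≠ 0 := by
      rintro rfl; exact hc0 (map_zero T)
    refine le_trans (hw x hxW hx0) ?_
    have hsub : (Finset.univ.filter fun σ => x σ ≠ 0) ⊆
        ((Finset.univ.filter fun i => T x i ≠ 0).image fun i => (idx i).1) := by
      intro σ hσ
      simp only [Finset.mem_filter, Finset.mem_univ, true_and] at hσ
      have hne : e1 (x σ) ≠ 0 := fun h => hσ (e1.map_eq_zero_iff.mp h)
      obtain ⟨r, hr⟩ := Function.ne_iff.mp hne
      simp only [Finset.mem_image]
      refine ⟨idx.symm (σ, r), ?_, by simp⟩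
      simp only [Finset.mem_filter, Finset.mem_univ, true_and]
      show e1 (x (idx (idx.symm (σ, r))).1) (idx (idx.symm (σ, r))).2 ≠ 0
      rw [Equiv.apply_symm_apply]
      exact hr
    refine le_trans (Finset.card_le_card hsub) (le_of_eq ?_)
    unfold labelWeight
    congr 1
open Polynomial
open scoped Classical

/-- For `v : Fin k → K` the polynomial with those coefficients. -/
noncomputable def polyOf {K : Type*} [Field K] {k : ℕ} (v : Fin k → K) : K[X] :=
  ∑ r : Fin k, C (v r) * X ^ (r : ℕ)

theorem polyOf_eval {K : Type*} [Field K] {k : ℕ} (v : Fin k → K) (a : K) :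
    (polyOf v).eval a = ∑ r : Fin k, v r * a ^ (r : ℕ) := by
  simp [polyOf, eval_finset_sum]

theorem polyOf_coeff {K : Type*} [Field K] {k : ℕ} (v : Fin k → K) (r : Fin k) :
    (polyOf v).coeff (r : ℕ) = v r := by
  classical
  simp only [polyOf, finset_sum_coeff, coeff_C_mul, coeff_X_pow]
  rw [Finset.sum_eq_single r]
  · simp
  · intro b _ hb
    have : ¬ ((r : ℕ) = (b : ℕ)) := fun h => hb (Fin.ext h.symm)
    simp [this]
  · simp

theorem polyOf_ne_zero {K : Type*} [Field K] {k : ℕ} {v : Fin k → K} (hv : v ≠ 0) :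
    polyOf v ≠ 0 := by
  intro h
  apply hv
  funext r
  have := polyOf_coeff v r
  rw [h] at this
  simpa using this.symm

theorem polyOf_degree_lt {K : Type*} [Field K] {k : ℕ} (v : Fin k → K) :
    (polyOf v).degree < (k : ℕ) := by
  apply lt_of_le_of_lt (degree_sum_le _ _)
  rw [Finset.sup_lt_iff (by exact_mod_cast WithBot.bot_lt_coe _)]
  intro r _
  exact lt_of_le_of_lt (degree_C_mul_X_pow_le _ _) (by exact_mod_cast r.2)

theorem polyOf_natDegree_le {K : Type*} [Field K] {k : ℕ} (v : Fin k → K) (hk : 0 < k) :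
    (polyOf v).natDegree ≤ k - 1 := by
  by_cases h : polyOf v = 0
  · simp [h]
  · have := polyOf_degree_lt v
    rw [degree_eq_natDegree h] at this
    exact_mod_cast Nat.le_sub_one_of_lt (by exact_mod_cast this)

theorem exists_code_extRS {K : Type*} [Field K] [Fintype K] {s k dt : ℕ}
    (hk : 0 < k) (hks : k + dt = s) (hcard : s ≤ Fintype.card K + 1) :
    ∃ W : Submodule K (Fin s → K), Module.finrank K ↥W = k ∧
      ∀ x ∈ W, x ≠ 0 → dt + 1 ≤ (Finset.univ.filter fun σ => x σ ≠ 0).card := by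
  -- embedding of coordinates into `Option K`
  obtain ⟨ι⟩ : Nonempty (Fin s ↪ Option K) :=
    Function.Embedding.nonempty_of_card_le (by simpa using hcard)
  have hklast : k - 1 < k := Nat.sub_lt hk one_pos
  let last : Fin k := ⟨k - 1, hklast⟩
  let φ : (Fin k → K) →ₗ[K] (Fin s → K) :=
    { toFun := fun v i => Option.elim (ι i) (v last) (fun a => ∑ r : Fin k, v r * a ^ (r : ℕ))
      map_add' := by
        intro v w; funext i
        cases h : ι i <;> simp [h, Finset.sum_add_distrib, add_mul]
      map_smul' := by
        intro c v; funext i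
        cases h : ι i <;> simp [h, Finset.mul_sum, mul_assoc] }
  -- the key weight estimate
  have weight : ∀ v : Fin k → K, v ≠ 0 →
      dt + 1 ≤ (Finset.univ.filter fun σ => φ v σ ≠ 0).card := by
    intro v hv
    have hp : polyOf v ≠ 0 := polyOf_ne_zero hv
    -- the zero set
    set Z := (Finset.univ.filter fun σ => φ v σ = 0) with hZ
    have hZcard : Z.card ≤ k - 1 := by
      have hinj : Set.InjOn ι Z := fun a _ b _ h => ι.injective h
      by_cases hlast : v last = 0
      · -- then all of `v`'s mass is in lower coefficients
        have hk2 : 2 ≤ k := by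
          by_contra hcon
          push_neg at hcon
          apply hv
          funext r
          simp only [Pi.zero_apply]
          have hr : r = last := by
            apply Fin.ext
            have h1 := r.2
            simp only [last]
            omega
          rw [hr]
          exact hlast
        have hdeg : (polyOf v).natDegree ≤ k - 2 := by
          have hdlt : (polyOf v).degree < ((k - 1 : ℕ) : WithBot ℕ) := by
            apply lt_of_le_of_lt (degree_sum_le _ _)
            rw [Finset.sup_lt_iff (by exact_mod_cast WithBot.bot_lt_coe _)]
            intro r _
            rcases eq_or_ne r last with rfl | hr
            · simp [hlast]
            · refine lt_of_le_of_lt (degree_C_mul_X_pow_le _ _) ?_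
              have : (r : ℕ) < k - 1 := by
                have := r.2
                have hne : (r : ℕ) ≠ k - 1 := fun h => hr (Fin.ext (by simp [h, last]))
                omega
              exact_mod_cast this
          rw [degree_eq_natDegree hp] at hdlt
          have : (polyOf v).natDegree < k - 1 := by exact_mod_cast hdlt
          omega
        have hsub : Z.image ι ⊆ insert none ((polyOf v).roots.toFinset.image some) := by
          intro o ho
          obtain ⟨i, hi, rfl⟩ := Finset.mem_image.mp ho
          simp only [hZ, Finset.mem_filter] at hi
          cases h : ι i with
          | none => simp
          | some a =>
            apply Finset.mem_insert_of_mem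
            simp only [Finset.mem_image, Multiset.mem_toFinset]
            refine ⟨a, ?_, rfl⟩
            rw [mem_roots hp, IsRoot.def, polyOf_eval]
            have h2 := hi.2
            simp only [φ, LinearMap.coe_mk, AddHom.coe_mk, h] at h2
            simpa using h2
        calc Z.card = (Z.image ι).card := (Finset.card_image_of_injOn hinj).symm
          _ ≤ (insert none ((polyOf v).roots.toFinset.image some)).card :=
              Finset.card_le_card hsub
          _ ≤ ((polyOf v).roots.toFinset.image some).card + 1 := Finset.card_insert_le _ _
          _ ≤ Multiset.card (polyOf v).roots + 1 := by
              gcongr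
              exact le_trans (Finset.card_image_le) (Multiset.toFinset_card_le _)
          _ ≤ (k - 2) + 1 := by
              gcongr
              exact le_trans (card_roots' _) hdeg
          _ ≤ k - 1 := by omega
      · have hsub : Z.image ι ⊆ (polyOf v).roots.toFinset.image some := by
          intro o ho
          obtain ⟨i, hi, rfl⟩ := Finset.mem_image.mp ho
          simp only [hZ, Finset.mem_filter] at hi
          have hi2 := hi.2
          cases h : ι i with
          | none =>
            exfalso
            apply hlast
            simp only [φ, LinearMap.coe_mk, AddHom.coe_mk, h] at hi2
            simpa using hi2
          | some a =>
            simp only [Finset.mem_image, Multiset.mem_toFinset]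
            refine ⟨a, ?_, rfl⟩
            rw [mem_roots hp, IsRoot.def, polyOf_eval]
            simp only [φ, LinearMap.coe_mk, AddHom.coe_mk, h] at hi2
            simpa using hi2
        calc Z.card = (Z.image ι).card := (Finset.card_image_of_injOn hinj).symm
          _ ≤ ((polyOf v).roots.toFinset.image some).card := Finset.card_le_card hsub
          _ ≤ Multiset.card (polyOf v).roots := by
              exact le_trans (Finset.card_image_le) (Multiset.toFinset_card_le _)
          _ ≤ k - 1 := le_trans (card_roots' _) (polyOf_natDegree_le v hk)
    have hsplit : (Finset.univ.filter fun σ => φ v σ ≠ 0).card = s - Z.card := by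
      rw [hZ, Finset.filter_not, Finset.card_sdiff_of_subset (Finset.filter_subset _ _)]
      simp
    rw [hsplit]
    omega
  have hφinj : Function.Injective φ := by
    rw [injective_iff_map_eq_zero]
    intro v hv0
    by_contra hv
    have := weight v hv
    rw [hv0] at this
    simp at this
  refine ⟨LinearMap.range φ, ?_, ?_⟩
  · rw [LinearMap.finrank_range_of_inj hφinj, Module.finrank_pi]
    simp
  · rintro x ⟨v, rfl⟩ hx0
    exact weight v (fun h => hx0 (by rw [h, map_zero]))
open Polynomial
open scoped Classical

theorem exists_code_hyp3 {K : Type*} [Field K] [Fintype K] (h2 : CharP K 2) {s : ℕ}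
    (hs : s = Fintype.card K + 2) :
    ∃ W : Submodule K (Fin s → K), Module.finrank K ↥W = 3 ∧
      ∀ x ∈ W, x ≠ 0 → Fintype.card K ≤ (Finset.univ.filter fun σ => x σ ≠ 0).card := by
  have hcards : Fintype.card (Fin s) = Fintype.card (Option (Option K)) := by simp [hs]
  let e : Fin s ≃ Option (Option K) := Fintype.equivOfCardEq hcards
  let φ : (Fin 3 → K) →ₗ[K] (Fin s → K) :=
    { toFun := fun v i =>
        Option.elim (e i) (v 2) (fun o' => Option.elim o' (v 1)
          (fun a => v 0 + v 1 * a + v 2 * (a * a)))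
      map_add' := by
        intro v w; funext i
        rcases h : e i with _ | (_ | a) <;> simp [h] <;> ring
      map_smul' := by
        intro c v; funext i
        rcases h : e i with _ | (_ | a) <;> simp [h] <;> ring }
  have weight : ∀ v : Fin 3 → K, v ≠ 0 →
      Fintype.card K ≤ (Finset.univ.filter fun σ => φ v σ ≠ 0).card := by
    intro v hv
    set Z := (Finset.univ.filter fun σ => φ v σ = 0) with hZdef
    -- the set of roots of the affine quadratic
    set R := (Finset.univ.filter fun a : K => v 0 + v 1 * a + v 2 * (a * a) = 0) with hRdef
    have hZsub : Z.image e ⊆ (R.image (fun a => some (some a))) ∪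
        ((if v 1 = 0 then {some none} else ∅) ∪ (if v 2 = 0 then {none} else ∅)) := by
      intro o ho
      obtain ⟨i, hi, rfl⟩ := Finset.mem_image.mp ho
      simp only [hZdef, Finset.mem_filter] at hi
      have hi2 := hi.2
      rcases h : e i with _ | (_ | a)
      · simp only [φ, LinearMap.coe_mk, AddHom.coe_mk, h] at hi2
        simp only [Option.elim] at hi2
        simp [h, Finset.mem_union, hi2]
      · simp only [φ, LinearMap.coe_mk, AddHom.coe_mk, h] at hi2
        simp only [Option.elim] at hi2
        simp [h, Finset.mem_union, hi2]
      · simp only [φ, LinearMap.coe_mk, AddHom.coe_mk, h] at hi2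
        simp only [Option.elim] at hi2
        apply Finset.mem_union_left
        simp only [Finset.mem_image]
        exact ⟨a, by simp [hRdef, hi2], rfl⟩
    have hR : R.card + ((if v 1 = 0 then ({some none} : Finset (Option (Option K))) else ∅).card
        + (if v 2 = 0 then ({none} : Finset (Option (Option K))) else ∅).card) ≤ 2 := by
      by_cases h2v : v 2 = 0
      · by_cases h1v : v 1 = 0
        · -- constant nonzero
          have h0v : v 0 ≠ 0 := by
            intro h0v
            apply hv; funext r; fin_cases r <;> simp [h0v, h1v, h2v]
          have : R = ∅ := by
            rw [Finset.eq_empty_iff_forall_notMem]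
            intro a ha
            simp only [hRdef, Finset.mem_filter, h1v, h2v] at ha
            apply h0v
            simpa using ha.2
          simp [this, h1v, h2v]
        · -- linear
          have : R.card ≤ 1 := by
            apply Finset.card_le_one.mpr
            intro a ha b hb
            simp only [hRdef, Finset.mem_filter, h2v] at ha hb
            have ha2 := ha.2; have hb2 := hb.2
            have : v 1 * a = v 1 * b := by
              have := sub_eq_zero.mpr (ha2.trans hb2.symm)
              linear_combination ha2 - hb2
            exact mul_left_cancel₀ h1v this
          rw [if_neg h1v, if_pos h2v]
          simp only [Finset.card_empty, Finset.card_singleton]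
          omega
      · by_cases h1v : v 1 = 0
        · -- v0 + v2 a^2, Frobenius injective
          have : R.card ≤ 1 := by
            apply Finset.card_le_one.mpr
            intro a ha b hb
            simp only [hRdef, Finset.mem_filter, h1v] at ha hb
            have ha2 := ha.2; have hb2 := hb.2
            have hsq : a * a = b * b := by
              have : v 2 * (a * a) = v 2 * (b * b) := by linear_combination ha2 - hb2
              exact mul_left_cancel₀ h2v this
            have hab2 : a ^ 2 = b ^ 2 := by rw [pow_two, pow_two]; exact hsq
            haveI : Fact (Nat.Prime 2) := ⟨Nat.prime_two⟩
            have hf : frobenius K 2 a = frobenius K 2 b := by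
              simp only [frobenius_def]; exact hab2
            exact frobenius_inj K 2 hf
          rw [if_pos h1v, if_neg h2v]
          simp only [Finset.card_empty, Finset.card_singleton]
          omega
        · -- genuine quadratic
          have : R.card ≤ 2 := by
            set p : K[X] := C (v 2) * X ^ 2 + C (v 1) * X + C (v 0) with hpdef
            have hpne : p ≠ 0 := by
              intro h
              have : p.coeff 2 = v 2 := by simp [hpdef, coeff_C]
              rw [h] at this
              exact h2v (by simpa using this.symm)
            have hsub : R ⊆ p.roots.toFinset := by
              intro a ha
              simp only [hRdef, Finset.mem_filter] at ha
              rw [Multiset.mem_toFinset, mem_roots hpne, IsRoot.def]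
              simp only [hpdef, eval_add, eval_mul, eval_pow, eval_C, eval_X]
              linear_combination ha.2
            calc R.card ≤ p.roots.toFinset.card := Finset.card_le_card hsub
              _ ≤ Multiset.card p.roots := Multiset.toFinset_card_le _
              _ ≤ p.natDegree := card_roots' p
              _ ≤ 2 := natDegree_quadratic_le
          rw [if_neg h1v, if_neg h2v]
          simp only [Finset.card_empty]
          omega
    have hZcard : Z.card ≤ 2 := by
      calc Z.card = (Z.image e).card := (Finset.card_image_of_injOn
            (fun a _ b _ h => e.injective h)).symm
        _ ≤ _ := Finset.card_le_card hZsub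
        _ ≤ (R.image (fun a => some (some a))).card +
            ((if v 1 = 0 then ({some none} : Finset (Option (Option K))) else ∅).card
            + (if v 2 = 0 then ({none} : Finset (Option (Option K))) else ∅).card) := by
              refine le_trans (Finset.card_union_le _ _) ?_
              gcongr
              exact Finset.card_union_le _ _
        _ ≤ 2 := le_trans (by gcongr; exact Finset.card_image_le) hR
    have hsplit : (Finset.univ.filter fun σ => φ v σ ≠ 0).card = s - Z.card := by
      rw [hZdef, Finset.filter_not, Finset.card_sdiff_of_subset (Finset.filter_subset _ _)]
      simp
    rw [hsplit]
    omega
  have hφinj : Function.Injective φ := by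
    rw [injective_iff_map_eq_zero]
    intro v hv0
    by_contra hv
    have := weight v hv
    rw [hv0] at this
    simp only [ne_eq, Pi.zero_apply, not_true_eq_false] at this
    simp only [Finset.filter_false, Finset.card_empty] at this
    have := Fintype.one_lt_card (α := K)
    omega
  refine ⟨LinearMap.range φ, ?_, ?_⟩
  · rw [LinearMap.finrank_range_of_inj hφinj, Module.finrank_pi]
    simp
  · rintro x ⟨v, rfl⟩ hx0
    exact weight v (fun h => hx0 (by rw [h, map_zero]))
open scoped Classical

theorem exists_code_dual4 {K : Type*} [Field K] [Fintype K] (h2 : CharP K 2) {s : ℕ}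
    (hs : s = Fintype.card K + 2) :
    ∃ W : Submodule K (Fin s → K), Module.finrank K ↥W = Fintype.card K - 1 ∧
      ∀ x ∈ W, x ≠ 0 → 4 ≤ (Finset.univ.filter fun σ => x σ ≠ 0).card := by
  have hcards : Fintype.card (Fin s) = Fintype.card (Option (Option K)) := by simp [hs]
  let e : Fin s ≃ Option (Option K) := Fintype.equivOfCardEq hcards
  let col : Option (Option K) → Fin 3 → K := fun o =>
    Option.elim o ![0, 0, 1] (fun o' => Option.elim o' ![0, 1, 0] (fun a => ![1, a, a * a]))
  let H : (Fin s → K) →ₗ[K] (Fin 3 → K) :=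
    { toFun := fun x r => ∑ i, x i * col (e i) r
      map_add' := by intro x y; funext r; simp [add_mul, Finset.sum_add_distrib]
      map_smul' := by intro c x; funext r; simp [Finset.mul_sum, mul_assoc] }
  have hsingle : ∀ (o : Option (Option K)) (c : K),
      H (fun i => if i = e.symm o then c else 0) = c • col o := by
    intro o c
    funext r
    show ∑ i, (if i = e.symm o then c else 0) * col (e i) r = c * col o r
    rw [Finset.sum_eq_single (e.symm o)]
    · simp
    · intro b _ hb; simp [hb]
    · simp
  have hsurj : Function.Surjective H := by
    intro y
    refine ⟨(fun i => if i = e.symm (some (some 0)) then y 0 else 0)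
      + ((fun i => if i = e.symm (some none) then y 1 else 0)
      + (fun i => if i = e.symm none then y 2 else 0)), ?_⟩
    rw [map_add, map_add, hsingle, hsingle, hsingle]
    funext r
    fin_cases r <;> simp [col] <;> ring
  refine ⟨LinearMap.ker H, ?_, ?_⟩
  · have hrn := LinearMap.finrank_range_add_finrank_ker H
    rw [LinearMap.range_eq_top.mpr hsurj] at hrn
    rw [finrank_top, Module.finrank_pi, Module.finrank_pi] at hrn
    simp only [Fintype.card_fin] at hrn
    have h1 : 1 ≤ Fintype.card K := Fintype.card_pos
    omega
  · intro x hx hx0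
    by_contra hlt
    push_neg at hlt
    have hsupp3 : (Finset.univ.filter fun σ => x σ ≠ 0).card ≤ 3 := by omega
    set χ : Option (Option K) → K := fun o => x (e.symm o) with hχ
    set A : Finset K := Finset.univ.filter (fun a => χ (some (some a)) ≠ 0) with hA
    -- the three parity-check equations
    have hEq : ∀ r : Fin 3, χ none * col none r + (χ (some none) * col (some none) r
        + ∑ a ∈ A, χ (some (some a)) * col (some (some a)) r) = 0 := by
      intro r
      have h0 : ∑ i, x i * col (e i) r = 0 := by
        have := congrFun (LinearMap.mem_ker.mp hx) r
        exact this
      have h1 : ∑ o : Option (Option K), χ o * col o r = ∑ i, x i * col (e i) r := by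
        rw [← Equiv.sum_comp e (fun o => χ o * col o r)]
        apply Finset.sum_congr rfl
        intro i _
        simp [hχ]
      have h2 : ∑ a ∈ A, χ (some (some a)) * col (some (some a)) r
          = ∑ a : K, χ (some (some a)) * col (some (some a)) r := by
        apply Finset.sum_filter_of_ne
        intro a _ h hz
        exact h (by rw [hz, zero_mul])
      rw [h2, ← Fintype.sum_option (fun o' => χ (some o') * col (some o') r),
        ← Fintype.sum_option (fun o => χ o * col o r), h1, h0]
    have E0 : ∑ a ∈ A, χ (some (some a)) = 0 := by
      have := hEq 0
      simpa [col] using this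
    have E1 : χ (some none) + ∑ a ∈ A, χ (some (some a)) * a = 0 := by
      have := hEq 1
      simpa [col] using this
    have E2 : χ none + ∑ a ∈ A, χ (some (some a)) * (a * a) = 0 := by
      have := hEq 2
      simpa [col] using this
    -- support counting
    have hcount : A.card + ((if χ (some none) = 0 then 0 else 1)
        + (if χ none = 0 then 0 else 1)) ≤ 3 := by
      set S := (Finset.univ.filter fun σ => x σ ≠ 0) with hS
      have hsub : (A.image (fun a => some (some a)))
          ∪ ((if χ (some none) = 0 then ∅ else {some none})
          ∪ (if χ none = 0 then ∅ else ({none} : Finset (Option (Option K))))) ⊆ S.image e := by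
        intro o ho
        simp only [Finset.mem_union] at ho
        rcases ho with ho | (ho | ho)
        · obtain ⟨a, ha, rfl⟩ := Finset.mem_image.mp ho
          simp only [hA, Finset.mem_filter] at ha
          refine Finset.mem_image.mpr ⟨e.symm (some (some a)), ?_, by simp⟩
          simp only [hS, Finset.mem_filter, Finset.mem_univ, true_and]
          exact ha.2
        · by_cases h : χ (some none) = 0
          · simp [h] at ho
          · rw [if_neg h] at ho
            simp only [Finset.mem_singleton] at ho
            subst ho
            refine Finset.mem_image.mpr ⟨e.symm (some none), ?_, by simp⟩
            simp only [hS, Finset.mem_filter, Finset.mem_univ, true_and]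
            exact h
        · by_cases h : χ none = 0
          · simp [h] at ho
          · rw [if_neg h] at ho
            simp only [Finset.mem_singleton] at ho
            subst ho
            refine Finset.mem_image.mpr ⟨e.symm none, ?_, by simp⟩
            simp only [hS, Finset.mem_filter, Finset.mem_univ, true_and]
            exact h
      have hdisj1 : Disjoint (A.image (fun a => some (some a)))
          ((if χ (some none) = 0 then ∅ else {some none})
          ∪ (if χ none = 0 then ∅ else ({none} : Finset (Option (Option K))))) := by
        rw [Finset.disjoint_left]
        intro o ho hmem
        obtain ⟨a, _, rfl⟩ := Finset.mem_image.mp ho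
        simp only [Finset.mem_union] at hmem
        rcases hmem with h | h <;> split_ifs at h <;> simp_all
      have hdisj2 : Disjoint (if χ (some none) = 0 then ∅ else {some none})
          (if χ none = 0 then ∅ else ({none} : Finset (Option (Option K)))) := by
        split_ifs <;> simp
      have hcard1 : ((A.image (fun a => some (some a)))
          ∪ ((if χ (some none) = 0 then ∅ else {some none})
          ∪ (if χ none = 0 then ∅ else ({none} : Finset (Option (Option K)))))).card
          = A.card + ((if χ (some none) = 0 then 0 else 1)
            + (if χ none = 0 then 0 else 1)) := by
        rw [Finset.card_union_of_disjoint hdisj1, Finset.card_union_of_disjoint hdisj2,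
          Finset.card_image_of_injective _ (fun a b h => by simpa using h)]
        congr 1
        congr 1 <;> split_ifs <;> simp
      calc A.card + ((if χ (some none) = 0 then 0 else 1) + (if χ none = 0 then 0 else 1))
          = _ := hcard1.symm
        _ ≤ (S.image e).card := Finset.card_le_card hsub
        _ ≤ S.card := Finset.card_image_le
        _ ≤ 3 := hsupp3
    -- now the case analysis on |A|
    have hAcard : A.card ≤ 3 := by omega
    have hmemA : ∀ a ∈ A, χ (some (some a)) ≠ 0 := by
      intro a ha
      simpa [hA] using (Finset.mem_filter.mp ha).2
    interval_cases hAc : A.card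
    · -- A empty : x = 0
      rw [Finset.card_eq_zero] at hAc
      rw [hAc] at E0 E1 E2
      simp only [Finset.sum_empty, add_zero] at E1 E2
      apply hx0
      funext i
      have : χ (e i) = x i := by simp [hχ]
      rw [← this]
      rcases e i with _ | (_ | a)
      · exact E2
      · exact E1
      · by_contra hne
        have : a ∈ A := by
          rw [hA, Finset.mem_filter]
          exact ⟨Finset.mem_univ _, hne⟩
        rw [hAc] at this
        exact absurd this (Finset.notMem_empty _)
    · -- |A| = 1
      obtain ⟨a, ha⟩ := Finset.card_eq_one.mp hAc
      have haA : a ∈ A := by rw [ha]; exact Finset.mem_singleton_self a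
      rw [ha, Finset.sum_singleton] at E0
      exact hmemA a haA E0
    · -- |A| = 2
      obtain ⟨a, b, hab, hA2⟩ := Finset.card_eq_two.mp hAc
      have haA : a ∈ A := by rw [hA2]; simp
      have hbA : b ∈ A := by rw [hA2]; simp
      rw [hA2, Finset.sum_insert (by simp [hab]), Finset.sum_singleton] at E0 E1 E2
      have hone : χ (some none) = 0 ∨ χ none = 0 := by
        by_contra hcon
        push_neg at hcon
        rw [if_neg hcon.1, if_neg hcon.2] at hcount
        omega
      have hsubne : a - b ≠ 0 := sub_ne_zero.mpr hab
      rcases hone with h | h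
      · -- use rows 0 and 1
        rw [h, zero_add] at E1
        have key : χ (some (some a)) * (a - b) = 0 := by linear_combination E1 - b * E0
        exact hmemA a haA ((mul_eq_zero.mp key).resolve_right hsubne)
      · -- use rows 0 and 2, char 2
        rw [h, zero_add] at E2
        have haddne : a + b ≠ 0 := by
          haveI := h2
          rw [← CharTwo.sub_eq_add]
          exact hsubne
        have key : χ (some (some a)) * ((a - b) * (a + b)) = 0 := by
          linear_combination E2 - (b * b) * E0
        rcases mul_eq_zero.mp key with h' | h'
        · exact hmemA a haA h'
        · exact absurd h' (mul_ne_zero hsubne haddne)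
    · -- |A| = 3
      obtain ⟨a, b, c, hab, hac, hbc, hA3⟩ := Finset.card_eq_three.mp hAc
      have haA : a ∈ A := by rw [hA3]; simp
      rw [hA3, Finset.sum_insert (by simp [hab, hac]),
        Finset.sum_insert (by simp [hbc]), Finset.sum_singleton] at E0 E1 E2
      have hu0 : χ (some none) = 0 := by
        by_contra hcon
        rw [if_neg hcon] at hcount
        omega
      have hw0 : χ none = 0 := by
        by_contra hcon
        rw [if_neg hcon] at hcount
        omega
      rw [hu0, zero_add] at E1
      rw [hw0, zero_add] at E2
      have key : χ (some (some a)) * ((a - b) * (a - c)) = 0 := by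
        linear_combination E2 - (b + c) * E1 + (b * c) * E0
      rcases mul_eq_zero.mp key with h' | h'
      · exact hmemA a haA h'
      · exact absurd h' (mul_ne_zero (sub_ne_zero.mpr hab) (sub_ne_zero.mpr hac))
end StmtAux

/-- Let F be a finite field with q elements and s, d, t positive
integers with s > dt.  Let j be a positive integer such that either q^j + 1 ≥ s, or
q^j is even, s − dt ∈ {3, q^j − 1}, and q^j + 2 ≥ s.  Then there exists a linear code
C ⊆ F^{js} of dimension j(s − dt) and a surjective labeling L : [js] → [s] under which
every nonzero codeword of C has labelweight at least dt + 1. -/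
theorem stmt_16 {F : Type*} [Field F] [Fintype F] {q s d t j : ℕ}
    (hq : Fintype.card F = q)
    (hs : 0 < s) (hd : 0 < d) (ht : 0 < t) (hst : d * t < s) (hj : 0 < j)
    (hcond : s ≤ q ^ j + 1 ∨
      (Even (q ^ j) ∧ (s - d * t = 3 ∨ s - d * t = q ^ j - 1) ∧ s ≤ q ^ j + 2)) :
    ∃ (C : Submodule F (Fin (j * s) → F)) (L : Fin (j * s) → Fin s),
      Function.Surjective L ∧
      Module.finrank F C = j * (s - d * t) ∧
      ∀ c ∈ C, c ≠ 0 → d * t + 1 ≤ labelWeight L c := by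
  classical
  subst hq
  -- the degree-`j` extension of `F`
  set K := ExtF F j with hK
  haveI : FiniteDimensional F K := by infer_instance
  have hjK : Module.finrank F K = j := ExtF.finrank_eq F j hj.ne'
  have hcardK : Fintype.card K = Fintype.card F ^ j := by
    rw [Module.card_eq_pow_finrank (K := F) (V := K), hjK]
  have hq2 : 2 ≤ Fintype.card F := Fintype.one_lt_card
  set dt := d * t with hdt
  have hdt1 : 1 ≤ dt := Nat.one_le_iff_ne_zero.mpr (by positivity)
  by_cases hc1 : s ≤ Fintype.card F ^ j + 1
  · -- extended Reed-Solomon case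
    have hks : (s - dt) + dt = s := by omega
    have hk : 0 < s - dt := by omega
    obtain ⟨W, hWrank, hWwt⟩ := exists_code_extRS (K := K) hk hks (by omega)
    obtain ⟨C, L, h1, h2, h3⟩ := transfer hj hjK W hWrank hWwt
    exact ⟨C, L, h1, h2, h3⟩
  · rcases hcond with h | ⟨heven, hk3, hs2⟩
    · omega
    · have hsQ : s = Fintype.card F ^ j + 2 := by omega
      -- characteristic two
      haveI h2K : CharP K 2 := by
        have hpK : CharP K (ringChar K) := ringChar.charP K
        have hpp : (ringChar K).Prime := CharP.char_is_prime K (ringChar K)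
        obtain ⟨n, -, hcard⟩ := FiniteField.card K (ringChar K)
        have heK : Even (Fintype.card K) := by rw [hcardK]; exact heven
        have h2dvd : 2 ∣ ringChar K ^ (n : ℕ) := by
          rw [← hcard]; exact heK.two_dvd
        have h2p : (2 : ℕ) ∣ ringChar K := Nat.Prime.dvd_of_dvd_pow Nat.prime_two h2dvd
        have : ringChar K = 2 := ((Nat.prime_dvd_prime_iff_eq Nat.prime_two hpp).mp h2p).symm
        rwa [this] at hpK
      have hsK : s = Fintype.card K + 2 := by rw [hcardK]; exact hsQ
      rcases hk3 with hk3 | hkQ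
      · -- hyperoval generator code, `k = 3`
        obtain ⟨W, hWrank, hWwt⟩ := exists_code_hyp3 h2K hsK
        have hw : dt + 1 = Fintype.card K := by rw [hcardK]; omega
        obtain ⟨C, L, h1, h2, h3⟩ := transfer hj hjK W hWrank hWwt
        refine ⟨C, L, h1, by rw [h2, hk3], fun c hc hc0 => ?_⟩
        rw [hw]
        exact h3 c hc hc0
      · -- dual hyperoval code, `dt = 3`
        obtain ⟨W, hWrank, hWwt⟩ := exists_code_dual4 h2K hsK
        have hdt3 : dt = 3 := by
          have := hq2
          have hQ2 : 2 ≤ Fintype.card F ^ j := by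
            calc 2 ≤ Fintype.card F := hq2
            _ ≤ Fintype.card F ^ j := Nat.le_self_pow hj.ne' _
          omega
        obtain ⟨C, L, h1, h2, h3⟩ := transfer hj hjK W hWrank hWwt
        refine ⟨C, L, h1, ?_, fun c hc hc0 => ?_⟩
        · rw [h2, hkQ, hcardK]
        · rw [hdt3]
          exact h3 c hc hc0
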